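/- Let A, X, Y be jointly distributed random variables with finite ranges satisfying condition (C): for all a, a', x, y, if p(a,x), p(a,y), p(a',x), p(a',y) are all positive then a = a'. Then H(A | X) + H(A | Y) ≤ H(A). -/

import Mathlib

open Finset

noncomputable section

/-- Probability of an event under a distribution on a finite sample space. -/
def pr {Ω : Type*} [Fintype Ω] (p : Ω → ℝ) (E : Set Ω) : ℝ :=
  ∑ ω, E.indicator p ω

/-- `p` is a probability mass function on the finite sample space `Ω`. -/
def IsPMF {Ω : Type*} [Fintype Ω] (p : Ω → ℝ) : Prop :=
  (∀ ω, 0 ≤ p ω) ∧ ∑ ω, p ω = 1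

/-- Shannon entropy (base 2) of a random variable `V` on a finite sample space. -/
def ent {Ω β : Type*} [Fintype Ω] [Fintype β] (p : Ω → ℝ) (V : Ω → β) : ℝ :=
  -∑ v, pr p {ω | V ω = v} * Real.logb 2 (pr p {ω | V ω = v})

/-- Conditional Shannon entropy (base 2): `H(V | W)`. -/
def condEnt {Ω β γ : Type*} [Fintype Ω] [Fintype β] [Fintype γ]
    (p : Ω → ℝ) (V : Ω → β) (W : Ω → γ) : ℝ :=
  ent p (fun ω => (V ω, W ω)) - ent p W

/-- Mutual information (base 2): `I(V : W)`. -/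
def mi {Ω β γ : Type*} [Fintype Ω] [Fintype β] [Fintype γ]
    (p : Ω → ℝ) (V : Ω → β) (W : Ω → γ) : ℝ :=
  ent p V + ent p W - ent p (fun ω => (V ω, W ω))

/-- Conditional mutual information (base 2): `I(V : W | U)`. -/
def cmi {Ω β γ δ : Type*} [Fintype Ω] [Fintype β] [Fintype γ] [Fintype δ]
    (p : Ω → ℝ) (V : Ω → β) (W : Ω → γ) (U : Ω → δ) : ℝ :=
  ent p (fun ω => (V ω, U ω)) + ent p (fun ω => (W ω, U ω))
    - ent p (fun ω => (V ω, W ω, U ω)) - ent p U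

end

/-- Log-sum inequality. -/
lemma log_sum_ineq {ι : Type*} (s : Finset ι) (q r : ι → ℝ)
    (hq : ∀ i ∈ s, 0 < q i) (hr : ∀ i ∈ s, 0 < r i) (hne : s.Nonempty) :
    (∑ i ∈ s, q i) * Real.log ((∑ i ∈ s, q i) / (∑ i ∈ s, r i)) ≤
      ∑ i ∈ s, q i * Real.log (q i / r i) := by
  set Q := ∑ i ∈ s, q i with hQdef
  set R := ∑ i ∈ s, r i with hRdef
  have hQ : 0 < Q := Finset.sum_pos hq hne
  have hR : 0 < R := Finset.sum_pos hr hne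
  have jensen := strictConcaveOn_log_Ioi.concaveOn.le_map_sum (t := s)
     (w := fun i => q i / Q) (p := fun i => r i / q i)
     (fun i hi => div_nonneg (hq i hi).le hQ.le)
     (by rw [← Finset.sum_div, div_self hQ.ne'])
     (fun i hi => Set.mem_Ioi.2 (div_pos (hr i hi) (hq i hi)))
  simp only [smul_eq_mul] at jensen
  have hsum : ∑ i ∈ s, q i / Q * (r i / q i) = R / Q := by
    rw [hRdef, Finset.sum_div]
    refine sum_congr rfl fun i hi => ?_
    have := (hq i hi).ne'
    field_simp
  rw [hsum] at jensen
  have h2 : ∑ i ∈ s, q i * Real.log (r i / q i) ≤ Q * Real.log (R / Q) := by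
    have h := mul_le_mul_of_nonneg_left jensen hQ.le
    rw [Finset.mul_sum] at h
    calc ∑ i ∈ s, q i * Real.log (r i / q i)
        = ∑ i ∈ s, Q * (q i / Q * Real.log (r i / q i)) := by
          refine sum_congr rfl fun i hi => ?_
          have := hQ.ne'
          field_simp
      _ ≤ Q * Real.log (R / Q) := h
  have h3 : Q * Real.log (Q / R) = -(Q * Real.log (R / Q)) := by
    rw [show Q / R = (R / Q)⁻¹ by rw [inv_div], Real.log_inv]; ring
  calc Q * Real.log (Q / R) = -(Q * Real.log (R / Q)) := h3
    _ ≤ -(∑ i ∈ s, q i * Real.log (r i / q i)) := neg_le_neg h2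
    _ = ∑ i ∈ s, q i * Real.log (q i / r i) := by
        rw [← Finset.sum_neg_distrib]
        refine sum_congr rfl fun i hi => ?_
        rw [show q i / r i = (r i / q i)⁻¹ by rw [inv_div], Real.log_inv]; ring

/-- The analytic core: marginal-entropy inequality under pairwise disjoint rectangles. -/
lemma core_ineq {α χ υ : Type*} [Fintype α] [Fintype χ] [Fintype υ]
    (f : α → ℝ) (g : χ → ℝ) (h : υ → ℝ) (F : α → χ → ℝ) (G : α → υ → ℝ)
    (hF0 : ∀ a x, 0 ≤ F a x) (hG0 : ∀ a y, 0 ≤ G a y)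
    (hFf : ∀ a, ∑ x, F a x = f a) (hGf : ∀ a, ∑ y, G a y = f a)
    (hFg : ∀ x, ∑ a, F a x = g x) (hGh : ∀ y, ∑ a, G a y = h y)
    (hf1 : ∑ a, f a = 1)
    (hC : ∀ a a' x y, F a x ≠ 0 → G a y ≠ 0 → F a' x ≠ 0 → G a' y ≠ 0 → a = a') :
    (∑ x, g x * Real.log (g x)) + (∑ y, h y * Real.log (h y))
      + (∑ a, f a * Real.log (f a))
      ≤ (∑ a, ∑ x, F a x * Real.log (F a x)) + (∑ a, ∑ y, G a y * Real.log (G a y)) := by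
  classical
  have hg0 : ∀ x, 0 ≤ g x := fun x => (hFg x) ▸ Finset.sum_nonneg fun a _ => hF0 a x
  have hh0 : ∀ y, 0 ≤ h y := fun y => (hGh y) ▸ Finset.sum_nonneg fun a _ => hG0 a y
  have hf0 : ∀ a, 0 ≤ f a := fun a => (hFf a) ▸ Finset.sum_nonneg fun x _ => hF0 a x
  have hFle_f : ∀ a x, F a x ≤ f a := fun a x =>
    (hFf a) ▸ Finset.single_le_sum (fun i _ => hF0 a i) (mem_univ x)
  have hFle_g : ∀ a x, F a x ≤ g x := fun a x =>
    (hFg x) ▸ Finset.single_le_sum (fun i _ => hF0 i x) (mem_univ a)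
  have hGle_f : ∀ a y, G a y ≤ f a := fun a y =>
    (hGf a) ▸ Finset.single_le_sum (fun i _ => hG0 a i) (mem_univ y)
  have hGle_h : ∀ a y, G a y ≤ h y := fun a y =>
    (hGh y) ▸ Finset.single_le_sum (fun i _ => hG0 i y) (mem_univ a)
  -- support sets
  set sX : α → Finset χ := fun a => univ.filter (fun x => F a x ≠ 0) with hsX
  set sY : α → Finset υ := fun a => univ.filter (fun y => G a y ≠ 0) with hsY
  set sA : Finset α := univ.filter (fun a => f a ≠ 0) with hsA
  set al : α → ℝ := fun a => ∑ x ∈ sX a, g x with hal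
  set be : α → ℝ := fun a => ∑ y ∈ sY a, h y with hbe
  -- the per-a "KL" terms
  set T : α → ℝ := fun a =>
    (∑ x, F a x * Real.log (F a x / (f a * g x)))
      + (∑ y, G a y * Real.log (G a y / (f a * h y)))
      + f a * Real.log (f a) with hT
  -- Identity: sum of T equals the difference of the two sides
  have key_per_a : ∀ a, T a
      = (∑ x, F a x * Real.log (F a x)) + (∑ y, G a y * Real.log (G a y))
        - (∑ x, F a x * Real.log (g x)) - (∑ y, G a y * Real.log (h y))
        - f a * Real.log (f a) := by
    intro a
    have h1 : ∑ x, F a x * Real.log (F a x / (f a * g x))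
        = ∑ x, (F a x * Real.log (F a x) - F a x * Real.log (g x)
            - F a x * Real.log (f a)) := by
      refine sum_congr rfl fun x _ => ?_
      by_cases hx : F a x = 0
      · simp [hx]
      · have hFx : 0 < F a x := lt_of_le_of_ne (hF0 a x) (Ne.symm hx)
        have hfa : f a ≠ 0 := (lt_of_lt_of_le hFx (hFle_f a x)).ne'
        have hgx : g x ≠ 0 := (lt_of_lt_of_le hFx (hFle_g a x)).ne'
        rw [Real.log_div hx (mul_ne_zero hfa hgx), Real.log_mul hfa hgx]; ring
    have h2 : ∑ y, G a y * Real.log (G a y / (f a * h y))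
        = ∑ y, (G a y * Real.log (G a y) - G a y * Real.log (h y)
            - G a y * Real.log (f a)) := by
      refine sum_congr rfl fun y _ => ?_
      by_cases hy : G a y = 0
      · simp [hy]
      · have hGy : 0 < G a y := lt_of_le_of_ne (hG0 a y) (Ne.symm hy)
        have hfa : f a ≠ 0 := (lt_of_lt_of_le hGy (hGle_f a y)).ne'
        have hhy : h y ≠ 0 := (lt_of_lt_of_le hGy (hGle_h a y)).ne'
        rw [Real.log_div hy (mul_ne_zero hfa hhy), Real.log_mul hfa hhy]; ring
    have h1' : ∑ x, F a x * Real.log (f a) = f a * Real.log (f a) := by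
      rw [← Finset.sum_mul, hFf]
    have h2' : ∑ y, G a y * Real.log (f a) = f a * Real.log (f a) := by
      rw [← Finset.sum_mul, hGf]
    rw [hT]
    simp only [h1, h2, Finset.sum_sub_distrib]
    rw [h1', h2']; ring
  have total : ∑ a, T a
      = (∑ a, ∑ x, F a x * Real.log (F a x)) + (∑ a, ∑ y, G a y * Real.log (G a y))
        - (∑ x, g x * Real.log (g x)) - (∑ y, h y * Real.log (h y))
        - (∑ a, f a * Real.log (f a)) := by
    have hSg : ∑ a, ∑ x, F a x * Real.log (g x) = ∑ x, g x * Real.log (g x) := by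
      rw [Finset.sum_comm]
      exact sum_congr rfl fun x _ => by rw [← Finset.sum_mul, hFg]
    have hSh : ∑ a, ∑ y, G a y * Real.log (h y) = ∑ y, h y * Real.log (h y) := by
      rw [Finset.sum_comm]
      exact sum_congr rfl fun y _ => by rw [← Finset.sum_mul, hGh]
    rw [sum_congr rfl fun a _ => key_per_a a]
    simp only [Finset.sum_sub_distrib, Finset.sum_add_distrib]
    rw [hSg, hSh]
  -- it suffices that 0 ≤ ∑ a, T a
  suffices h0T : 0 ≤ ∑ a, T a by linarith [total]
  -- drop a's with f a = 0
  have sum_drop : ∑ a ∈ sA, T a = ∑ a, T a := by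
    refine Finset.sum_filter_of_ne fun a _ hne => ?_
    by_contra h0

    apply hne
    have hFz : ∀ x, F a x = 0 := fun x => le_antisymm (h0 ▸ hFle_f a x) (hF0 a x)
    have hGz : ∀ y, G a y = 0 := fun y => le_antisymm (h0 ▸ hGle_f a y) (hG0 a y)
    simp [hT, hFz, hGz, h0]
  -- positivity facts on sA
  have hfa_pos : ∀ a ∈ sA, 0 < f a := fun a ha => by
    have := (mem_filter.1 ha).2
    exact lt_of_le_of_ne (hf0 a) (Ne.symm this)
  have hsXne : ∀ a ∈ sA, (sX a).Nonempty := by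
    intro a ha
    obtain ⟨x, _, hx⟩ := Finset.exists_ne_zero_of_sum_ne_zero
      (by rw [hFf a]; exact (hfa_pos a ha).ne' : ∑ x, F a x ≠ 0)
    exact ⟨x, mem_filter.2 ⟨mem_univ x, hx⟩⟩
  have hsYne : ∀ a ∈ sA, (sY a).Nonempty := by
    intro a ha
    obtain ⟨y, _, hy⟩ := Finset.exists_ne_zero_of_sum_ne_zero
      (by rw [hGf a]; exact (hfa_pos a ha).ne' : ∑ y, G a y ≠ 0)
    exact ⟨y, mem_filter.2 ⟨mem_univ y, hy⟩⟩
  have hgpos : ∀ a, ∀ x ∈ sX a, 0 < g x := fun a x hx => by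
    have hFX : F a x ≠ 0 := (mem_filter.1 hx).2
    exact lt_of_lt_of_le (lt_of_le_of_ne (hF0 a x) (Ne.symm hFX)) (hFle_g a x)
  have hhpos : ∀ a, ∀ y ∈ sY a, 0 < h y := fun a y hy => by
    have hGY : G a y ≠ 0 := (mem_filter.1 hy).2
    exact lt_of_lt_of_le (lt_of_le_of_ne (hG0 a y) (Ne.symm hGY)) (hGle_h a y)
  have hal_pos : ∀ a ∈ sA, 0 < al a := fun a ha =>
    Finset.sum_pos (fun x hx => hgpos a x hx) (hsXne a ha)
  have hbe_pos : ∀ a ∈ sA, 0 < be a := fun a ha =>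
    Finset.sum_pos (fun y hy => hhpos a y hy) (hsYne a ha)
  -- per-a lower bound via log-sum
  have step1 : ∀ a ∈ sA, f a * Real.log (f a / (al a * be a)) ≤ T a := by
    intro a ha
    have hfa := hfa_pos a ha
    have hα := hal_pos a ha
    have hβ := hbe_pos a ha
    have hE1 : f a * Real.log (f a / (f a * al a))
        ≤ ∑ x, F a x * Real.log (F a x / (f a * g x)) := by
      have hrestr : ∑ x ∈ sX a, F a x * Real.log (F a x / (f a * g x))
          = ∑ x, F a x * Real.log (F a x / (f a * g x)) := by
        refine Finset.sum_filter_of_ne fun x _ hne => ?_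
        by_contra h0; exact hne (by rw [h0]; ring)
      have hsq : ∑ x ∈ sX a, F a x = f a := by
        rw [← hFf a]
        exact Finset.sum_filter_of_ne fun x _ hne => hne
      have hsr : ∑ x ∈ sX a, f a * g x = f a * al a := by
        rw [hal, ← Finset.mul_sum]
      have := log_sum_ineq (sX a) (fun x => F a x) (fun x => f a * g x)
        (fun x hx => lt_of_le_of_ne (hF0 a x) (Ne.symm (mem_filter.1 hx).2))
        (fun x hx => mul_pos hfa (hgpos a x hx)) (hsXne a ha)
      rw [hrestr, hsq, hsr] at this
      exact this
    have hE2 : f a * Real.log (f a / (f a * be a))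
        ≤ ∑ y, G a y * Real.log (G a y / (f a * h y)) := by
      have hrestr : ∑ y ∈ sY a, G a y * Real.log (G a y / (f a * h y))
          = ∑ y, G a y * Real.log (G a y / (f a * h y)) := by
        refine Finset.sum_filter_of_ne fun y _ hne => ?_
        by_contra h0; exact hne (by rw [h0]; ring)
      have hsq : ∑ y ∈ sY a, G a y = f a := by
        rw [← hGf a]
        exact Finset.sum_filter_of_ne fun y _ hne => hne
      have hsr : ∑ y ∈ sY a, f a * h y = f a * be a := by
        rw [hbe, ← Finset.mul_sum]
      have := log_sum_ineq (sY a) (fun y => G a y) (fun y => f a * h y)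
        (fun y hy => lt_of_le_of_ne (hG0 a y) (Ne.symm (mem_filter.1 hy).2))
        (fun y hy => mul_pos hfa (hhpos a y hy)) (hsYne a ha)
      rw [hrestr, hsq, hsr] at this
      exact this
    rw [Real.log_div hfa.ne' (mul_ne_zero hfa.ne' hα.ne'),
      Real.log_mul hfa.ne' hα.ne'] at hE1
    rw [Real.log_div hfa.ne' (mul_ne_zero hfa.ne' hβ.ne'),
      Real.log_mul hfa.ne' hβ.ne'] at hE2
    rw [hT, Real.log_div hfa.ne' (mul_ne_zero hα.ne' hβ.ne'),
      Real.log_mul hα.ne' hβ.ne']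
    nlinarith [hE1, hE2]
  -- disjoint rectangles
  have hdisj : (sA : Set α).PairwiseDisjoint (fun a => sX a ×ˢ sY a) := by
    intro a ha a' ha' hne
    simp only [Function.onFun, Finset.disjoint_left]
    intro z hz hz'
    rw [Finset.mem_product] at hz hz'
    exact hne (hC a a' z.1 z.2 (mem_filter.1 hz.1).2 (mem_filter.1 hz.2).2
      (mem_filter.1 hz'.1).2 (mem_filter.1 hz'.2).2)
  have hg1 : ∑ x, g x = 1 := by
    rw [← hf1]
    rw [show ∑ x, g x = ∑ x, ∑ a, F a x from sum_congr rfl fun x _ => (hFg x).symm,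
      Finset.sum_comm]
    exact sum_congr rfl fun a _ => hFf a
  have hh1 : ∑ y, h y = 1 := by
    rw [← hf1]
    rw [show ∑ y, h y = ∑ y, ∑ a, G a y from sum_congr rfl fun y _ => (hGh y).symm,
      Finset.sum_comm]
    exact sum_congr rfl fun a _ => hGf a
  have hQle : ∑ a ∈ sA, al a * be a ≤ 1 := by
    have hrect : ∀ a ∈ sA, al a * be a = ∑ z ∈ sX a ×ˢ sY a, g z.1 * h z.2 := by
      intro a _
      rw [hal, hbe, Finset.sum_mul_sum, Finset.sum_product]
    rw [sum_congr rfl hrect, ← Finset.sum_biUnion hdisj]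
    calc ∑ z ∈ sA.biUnion (fun a => sX a ×ˢ sY a), g z.1 * h z.2
        ≤ ∑ z : χ × υ, g z.1 * h z.2 :=
          Finset.sum_le_sum_of_subset_of_nonneg (Finset.subset_univ _)
            (fun z _ _ => mul_nonneg (hg0 z.1) (hh0 z.2))
      _ = (∑ x, g x) * (∑ y, h y) := by
          rw [Finset.sum_mul_sum, Fintype.sum_prod_type]
      _ = 1 := by rw [hg1, hh1]; ring
  -- sA is nonempty and carries total mass 1
  have hsAf : ∑ a ∈ sA, f a = 1 := by
    rw [← hf1]; exact Finset.sum_filter_of_ne fun a _ hne => hne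
  have hsAne : sA.Nonempty := by
    obtain ⟨a, _, ha⟩ := Finset.exists_ne_zero_of_sum_ne_zero
      (hf1 ▸ one_ne_zero : ∑ a, f a ≠ 0)
    exact ⟨a, mem_filter.2 ⟨mem_univ a, ha⟩⟩
  have hQpos : 0 < ∑ a ∈ sA, al a * be a :=
    Finset.sum_pos (fun a ha => mul_pos (hal_pos a ha) (hbe_pos a ha)) hsAne
  -- final chain
  have c1 : (1 : ℝ) * Real.log (1 / (∑ a ∈ sA, al a * be a))
      ≤ ∑ a ∈ sA, f a * Real.log (f a / (al a * be a)) := by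
    have := log_sum_ineq sA f (fun a => al a * be a) hfa_pos
      (fun a ha => mul_pos (hal_pos a ha) (hbe_pos a ha)) hsAne
    rwa [hsAf] at this
  have c3 : 0 ≤ Real.log (1 / (∑ a ∈ sA, al a * be a)) := by
    apply Real.log_nonneg
    rw [le_div_iff₀ hQpos]; linarith [hQle]
  have c2 : ∑ a ∈ sA, f a * Real.log (f a / (al a * be a)) ≤ ∑ a ∈ sA, T a :=
    Finset.sum_le_sum step1
  calc (0:ℝ) ≤ 1 * Real.log (1 / (∑ a ∈ sA, al a * be a)) := by linarith [c3]
    _ ≤ ∑ a ∈ sA, T a := le_trans c1 c2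
    _ = ∑ a, T a := sum_drop

/-- Condition (C) implies `H(A|X) + H(A|Y) ≤ H(A)`. -/
theorem stmt_7 {Ω α χ υ : Type*} [Fintype Ω] [Fintype α] [Fintype χ] [Fintype υ]
    (p : Ω → ℝ) (hp : IsPMF p) (A : Ω → α) (X : Ω → χ) (Y : Ω → υ)
    (hC : ∀ (a a' : α) (x : χ) (y : υ),
      0 < pr p {ω | A ω = a ∧ X ω = x} →
      0 < pr p {ω | A ω = a ∧ Y ω = y} →
      0 < pr p {ω | A ω = a' ∧ X ω = x} →
      0 < pr p {ω | A ω = a' ∧ Y ω = y} → a = a') :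
    condEnt p A X + condEnt p A Y ≤ ent p A := by
  classical
  obtain ⟨hp0, hp1⟩ := hp
  set f : α → ℝ := fun a => pr p {ω | A ω = a} with hfdef
  set g : χ → ℝ := fun x => pr p {ω | X ω = x} with hgdef
  set h : υ → ℝ := fun y => pr p {ω | Y ω = y} with hhdef
  set F : α → χ → ℝ := fun a x => pr p {ω | A ω = a ∧ X ω = x} with hFdef
  set G : α → υ → ℝ := fun a y => pr p {ω | A ω = a ∧ Y ω = y} with hGdef
  have hpr : ∀ (E : Set Ω), pr p E = ∑ ω, if ω ∈ E then p ω else 0 := fun E => by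
    unfold pr; exact sum_congr rfl fun ω _ => Set.indicator_apply _ _ _
  have hpr0 : ∀ (E : Set Ω), 0 ≤ pr p E := fun E => by
    rw [hpr]; exact Finset.sum_nonneg fun ω _ => by split <;> simp [hp0 ω]
  -- marginalization identities
  have hFf : ∀ a, ∑ x, F a x = f a := by
    intro a
    simp only [hFdef, hfdef, hpr, Set.mem_setOf_eq]
    rw [Finset.sum_comm]
    refine Finset.sum_congr rfl fun ω _ => ?_
    by_cases hA : A ω = a <;> simp [hA]
  have hGf : ∀ a, ∑ y, G a y = f a := by
    intro a
    simp only [hGdef, hfdef, hpr, Set.mem_setOf_eq]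
    rw [Finset.sum_comm]
    refine Finset.sum_congr rfl fun ω _ => ?_
    by_cases hA : A ω = a <;> simp [hA]
  have hFg : ∀ x, ∑ a, F a x = g x := by
    intro x
    simp only [hFdef, hgdef, hpr, Set.mem_setOf_eq]
    rw [Finset.sum_comm]
    refine Finset.sum_congr rfl fun ω _ => ?_
    by_cases hX : X ω = x <;> simp [hX]
  have hGh : ∀ y, ∑ a, G a y = h y := by
    intro y
    simp only [hGdef, hhdef, hpr, Set.mem_setOf_eq]
    rw [Finset.sum_comm]
    refine Finset.sum_congr rfl fun ω _ => ?_
    by_cases hY : Y ω = y <;> simp [hY]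
  have hf1 : ∑ a, f a = 1 := by
    simp only [hfdef, hpr, Set.mem_setOf_eq]
    rw [Finset.sum_comm, ← hp1]
    refine Finset.sum_congr rfl fun ω _ => ?_
    simp
  -- entropy expressions
  have entA : ent p A = -((∑ a, f a * Real.log (f a)) / Real.log 2) := by
    unfold ent
    rw [Finset.sum_div]
    congr 1
    refine sum_congr rfl fun a _ => ?_
    rw [Real.logb, mul_div_assoc]
  have entX : ent p X = -((∑ x, g x * Real.log (g x)) / Real.log 2) := by
    unfold ent
    rw [Finset.sum_div]
    congr 1
    refine sum_congr rfl fun x _ => ?_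
    rw [Real.logb, mul_div_assoc]
  have entY : ent p Y = -((∑ y, h y * Real.log (h y)) / Real.log 2) := by
    unfold ent
    rw [Finset.sum_div]
    congr 1
    refine sum_congr rfl fun y _ => ?_
    rw [Real.logb, mul_div_assoc]
  have hFpair : ∀ v : α × χ, pr p {ω | (A ω, X ω) = v} = F v.1 v.2 := by
    intro v
    rw [hFdef]
    congr 1
    ext ω
    simp [Prod.ext_iff]
  have hGpair : ∀ v : α × υ, pr p {ω | (A ω, Y ω) = v} = G v.1 v.2 := by
    intro v
    rw [hGdef]
    congr 1
    ext ω
    simp [Prod.ext_iff]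
  have entAX : ent p (fun ω => (A ω, X ω))
      = -((∑ a, ∑ x, F a x * Real.log (F a x)) / Real.log 2) := by
    unfold ent
    beta_reduce
    rw [Fintype.sum_prod_type, Finset.sum_div]
    congr 1
    refine sum_congr rfl fun a _ => ?_
    rw [Finset.sum_div]
    refine sum_congr rfl fun x _ => ?_
    rw [hFpair (a, x), Real.logb, mul_div_assoc]
  have entAY : ent p (fun ω => (A ω, Y ω))
      = -((∑ a, ∑ y, G a y * Real.log (G a y)) / Real.log 2) := by
    unfold ent
    beta_reduce
    rw [Fintype.sum_prod_type, Finset.sum_div]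
    congr 1
    refine sum_congr rfl fun a _ => ?_
    rw [Finset.sum_div]
    refine sum_congr rfl fun y _ => ?_
    rw [hGpair (a, y), Real.logb, mul_div_assoc]
  -- the key inequality
  have key := core_ineq f g h F G
    (fun a x => hpr0 _) (fun a y => hpr0 _) hFf hGf hFg hGh hf1
    (fun a a' x y h1 h2 h3 h4 =>
      hC a a' x y (lt_of_le_of_ne (hpr0 _) (Ne.symm h1))
        (lt_of_le_of_ne (hpr0 _) (Ne.symm h2))
        (lt_of_le_of_ne (hpr0 _) (Ne.symm h3))
        (lt_of_le_of_ne (hpr0 _) (Ne.symm h4)))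
  have hL : 0 < Real.log 2 := Real.log_pos (by norm_num)
  unfold condEnt
  rw [entAX, entAY, entX, entY, entA]
  rw [show -((∑ a, ∑ x, F a x * Real.log (F a x)) / Real.log 2)
        - -((∑ x, g x * Real.log (g x)) / Real.log 2)
        + (-((∑ a, ∑ y, G a y * Real.log (G a y)) / Real.log 2)
        - -((∑ y, h y * Real.log (h y)) / Real.log 2))
      = ((∑ x, g x * Real.log (g x)) + (∑ y, h y * Real.log (h y))
          - (∑ a, ∑ x, F a x * Real.log (F a x))
          - (∑ a, ∑ y, G a y * Real.log (G a y))) / Real.log 2 by ring,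
    show -((∑ a, f a * Real.log (f a)) / Real.log 2)
      = (-(∑ a, f a * Real.log (f a))) / Real.log 2 by ring,
    div_le_div_iff₀ hL hL]
  nlinarith [key]
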